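/- Let a ∈ ℝ and b ∈ ℂ with α := |b|² − a² > 0, and let X be the 2×2 complex matrix with rows (i·a, b) and (conj(b), −i·a). Then X² = α·I, and for every t ∈ ℝ the matrix exponential satisfies exp(t·X) = cosh(√α·t)·I + (sinh(√α·t)/√α)·X. -/

import Mathlib

open Complex

set_option maxHeartbeats 1000000 in
/-- for `a ∈ ℝ`, `b ∈ ℂ` with `α = |b|² − a² > 0`, the matrix
`X = !![i·a, b; conj b, −i·a]` satisfies `X² = α·I` and
`exp(t·X) = cosh(√α·t)·I + (sinh(√α·t)/√α)·X` for every `t ∈ ℝ`. -/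
theorem exp_of_su_one_one_generator (a : ℝ) (b : ℂ)
    (α : ℝ) (hα : α = ‖b‖ ^ 2 - a ^ 2) (hpos : 0 < α)
    (X : Matrix (Fin 2) (Fin 2) ℂ)
    (hX : X = !![Complex.I * a, b; (starRingEnd ℂ) b, -(Complex.I * a)]) :
    X ^ 2 = (α : ℂ) • (1 : Matrix (Fin 2) (Fin 2) ℂ) ∧
    ∀ t : ℝ,
      NormedSpace.exp ((t : ℂ) • X)
        = ((Real.cosh (Real.sqrt α * t) : ℝ) : ℂ) • (1 : Matrix (Fin 2) (Fin 2) ℂ)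
          + ((Real.sinh (Real.sqrt α * t) / Real.sqrt α : ℝ) : ℂ) • X := by
  have hcb : (starRingEnd ℂ) b * b = (α : ℂ) + (a : ℂ) ^ 2 := by
    rw [mul_comm, Complex.mul_conj]
    rw [← Complex.normSq_eq_norm_sq] at hα
    have : (α : ℂ) = ((Complex.normSq b - a ^ 2 : ℝ) : ℂ) := by rw [← hα]
    rw [this]
    push_cast
    ring
  constructor
  · subst hX
    ext i j
    fin_cases i <;> fin_cases j <;>
      simp [pow_two, Matrix.mul_apply, Fin.sum_univ_two, Matrix.one_apply] <;>
      first
        | ring1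
        | linear_combination (a : ℂ) ^ 2 * Complex.I_sq + hcb
  · intro t
    set r : ℝ := Real.sqrt α with hrdef
    have hr0 : 0 < r := Real.sqrt_pos.mpr hpos
    have hr2 : (r : ℂ) ^ 2 = (α : ℂ) := by
      have : r ^ 2 = α := Real.sq_sqrt hpos.le
      exact_mod_cast congrArg (Complex.ofReal ·) this
    have hb0 : b ≠ 0 := by
      intro h
      rw [h] at hα
      simp at hα
      nlinarith [sq_nonneg a]
    have hrC : (r : ℂ) ≠ 0 := by exact_mod_cast hr0.ne'
    have hcb2 : (starRingEnd ℂ) b * b = (r : ℂ) ^ 2 + (a : ℂ) ^ 2 := by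
      rw [hcb, hr2]
    -- eigenvector matrix and its inverse
    set U : Matrix (Fin 2) (Fin 2) ℂ :=
      !![b, b; (r : ℂ) - Complex.I * a, -(r : ℂ) - Complex.I * a] with hU
    set V : Matrix (Fin 2) (Fin 2) ℂ :=
      (-(2 * (r : ℂ) * b))⁻¹ •
        !![-(r : ℂ) - Complex.I * a, -b; -((r : ℂ) - Complex.I * a), b] with hV
    have hden : -(2 * (r : ℂ) * b) ≠ 0 := by
      simp [hrC, hb0]
    have hUV : U * V = 1 := by
      ext i j
      fin_cases i <;> fin_cases j <;>
        (simp [hU, hV, Matrix.mul_apply, Fin.sum_univ_two, Matrix.one_apply] <;>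
          field_simp <;> ring)
    have hVU : V * U = 1 := by
      ext i j
      fin_cases i <;> fin_cases j <;>
        (simp [hU, hV, Matrix.mul_apply, Fin.sum_univ_two, Matrix.one_apply] <;>
          field_simp <;> ring)
    set u : (Matrix (Fin 2) (Fin 2) ℂ)ˣ := ⟨U, V, hUV, hVU⟩ with hu
    set D : Matrix (Fin 2) (Fin 2) ℂ :=
      Matrix.diagonal ![(r : ℂ) * t, -((r : ℂ) * t)] with hD
    have hXU : (t : ℂ) • X * U = U * D := by
      subst hX
      ext i j
      fin_cases i <;> fin_cases j <;>
        (simp [hU, hD, Matrix.mul_apply, Fin.sum_univ_two, Matrix.diagonal] <;>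
          first
            | ring1
            | linear_combination (t : ℂ) * hcb2 +
                (t : ℂ) * (a : ℂ) ^ 2 * Complex.I_sq)
    have hconj : (t : ℂ) • X = (u : Matrix (Fin 2) (Fin 2) ℂ) * D * (↑u⁻¹ : Matrix (Fin 2) (Fin 2) ℂ) := by
      have : (t : ℂ) • X = ((t : ℂ) • X * U) * V := by
        rw [Matrix.mul_assoc, hUV, Matrix.mul_one]
      rw [this, hXU]
      rfl
    rw [hconj, Matrix.exp_units_conj u D]
    have hexpD : NormedSpace.exp D =
        Matrix.diagonal ![Complex.exp ((r : ℂ) * t), Complex.exp (-((r : ℂ) * t))] := by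
      rw [hD, Matrix.exp_diagonal, Pi.exp_def]
      ext i j
      fin_cases i <;> fin_cases j <;>
        simp [Matrix.diagonal_apply, ← Complex.exp_eq_exp_ℂ]
    rw [hexpD]
    have hval : ((u : (Matrix (Fin 2) (Fin 2) ℂ)ˣ) : Matrix (Fin 2) (Fin 2) ℂ) = U := rfl
    have hinv : (↑u⁻¹ : Matrix (Fin 2) (Fin 2) ℂ) = V := rfl
    rw [hval, hinv]
    have hcoshC : ((Real.cosh (r * t) : ℝ) : ℂ)
        = (Complex.exp ((r : ℂ) * t) + Complex.exp (-((r : ℂ) * t))) / 2 := by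
      rw [Complex.ofReal_cosh]
      push_cast
      rw [Complex.cosh]
    have hsinhC : ((Real.sinh (r * t) / r : ℝ) : ℂ)
        = (Complex.exp ((r : ℂ) * t) - Complex.exp (-((r : ℂ) * t))) / (2 * r) := by
      rw [Complex.ofReal_div, Complex.ofReal_sinh]
      push_cast
      rw [Complex.sinh]
      field_simp
      try ring1
    subst hX
    set Dg : Matrix (Fin 2) (Fin 2) ℂ :=
      Matrix.diagonal ![Complex.exp ((r : ℂ) * t), Complex.exp (-((r : ℂ) * t))] with hDg
    set R : Matrix (Fin 2) (Fin 2) ℂ :=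
      ((Real.cosh (r * t) : ℝ) : ℂ) • (1 : Matrix (Fin 2) (Fin 2) ℂ)
        + ((Real.sinh (r * t) / r : ℝ) : ℂ) •
            !![Complex.I * a, b; (starRingEnd ℂ) b, -(Complex.I * a)] with hR
    have hconjb : (starRingEnd ℂ) b = ((r : ℂ) ^ 2 + (a : ℂ) ^ 2) / b := by
      field_simp
      linear_combination hcb2
    have hRU : R * U = U * Dg := by
      ext i j
      fin_cases i <;> fin_cases j <;>
        (simp [hR, hDg, hU, hconjb, Matrix.mul_apply, Fin.sum_univ_two,
            Matrix.diagonal_apply, Matrix.one_apply, Complex.cosh, Complex.sinh] <;>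
          field_simp <;> ring_nf <;> simp [Complex.I_sq] <;> try ring1)
    calc U * Dg * V = (R * U) * V := by rw [hRU]
    _ = R * (U * V) := by rw [Matrix.mul_assoc]
    _ = R := by rw [hUV, Matrix.mul_one]
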